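/- Iteration of tangents: if A ⊆ ℝⁿ is closed, x ∈ A, B ∈ Tan(A,x), and C ∈ Tan(B,0), then C ∈ Tan(A,x). -/

import Mathlib

open Metric Set Filter Topology Pointwise

noncomputable section

/-- Excess of `A` over `B`: `sup_{a ∈ A} inf_{b ∈ B} |a - b|` (extended-real valued). -/
def ex {n : ℕ} (A B : Set (EuclideanSpace ℝ (Fin n))) : ENNReal :=
  ⨆ a ∈ A, EMetric.infEdist a B

/-- Relative excess of `A` in the closed ball `B(x,r)` over `B`. -/
def relEx {n : ℕ} (x : EuclideanSpace ℝ (Fin n)) (r : ℝ)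
    (A B : Set (EuclideanSpace ℝ (Fin n))) : ℝ :=
  (ex (A ∩ closedBall x r) B).toReal / r

/-- Relative Walkup–Wets distance in `B(x,r)`. -/
def WW {n : ℕ} (x : EuclideanSpace ℝ (Fin n)) (r : ℝ)
    (A B : Set (EuclideanSpace ℝ (Fin n))) : ℝ :=
  max (relEx x r A B) (relEx x r B A)


/-- Attouch–Wets convergence of a sequence of sets to `L` (all sets containing `0`). -/
def AWT {n : ℕ} (F : ℕ → Set (EuclideanSpace ℝ (Fin n)))
    (L : Set (EuclideanSpace ℝ (Fin n))) : Prop :=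
  ∀ r : ℝ, 0 < r → Filter.Tendsto (fun i => WW (0 : EuclideanSpace ℝ (Fin n)) r (F i) L)
    Filter.atTop (nhds 0)

/-- The blow-up `(A - x)/t` of a set `A` at `x` with scale `t`. -/
def blowup {n : ℕ} (A : Set (EuclideanSpace ℝ (Fin n))) (x : EuclideanSpace ℝ (Fin n))
    (t : ℝ) : Set (EuclideanSpace ℝ (Fin n)) :=
  (fun a => t⁻¹ • (a - x)) '' A

namespace TangentAux

variable {n : ℕ}

local notation "E" => EuclideanSpace ℝ (Fin n)

lemma ex_le_iff {A B : Set E} {ε : ENNReal} :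
    ex A B ≤ ε ↔ ∀ a ∈ A, EMetric.infEdist a B ≤ ε := by
  simp [ex, iSup₂_le_iff]

lemma le_ex {A B : Set E} {a : E} (ha : a ∈ A) : EMetric.infEdist a B ≤ ex A B :=
  le_iSup₂_of_le a ha le_rfl

lemma ex_mono_left {A A' B : Set E} (h : A ⊆ A') : ex A B ≤ ex A' B :=
  ex_le_iff.2 fun a ha => le_ex (h ha)

lemma ex_le_radius {S B : Set E} (h0 : (0 : E) ∈ B) {ρ : ℝ} :
    ex (S ∩ closedBall 0 ρ) B ≤ ENNReal.ofReal ρ := by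
  refine ex_le_iff.2 fun a ha => ?_
  calc EMetric.infEdist a B ≤ edist a 0 := EMetric.infEdist_le_edist_of_mem h0
    _ ≤ ENNReal.ofReal ρ := by
        rw [edist_dist]
        exact ENNReal.ofReal_le_ofReal (mem_closedBall.mp ha.2)

lemma ex_ne_top {S B : Set E} (h0 : (0 : E) ∈ B) {ρ : ℝ} :
    ex (S ∩ closedBall 0 ρ) B ≠ ⊤ :=
  ((ex_le_radius h0).trans_lt ENNReal.ofReal_lt_top).ne

lemma relEx_nonneg {S T : Set E} {r : ℝ} (hr : 0 < r) : 0 ≤ relEx 0 r S T :=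
  div_nonneg ENNReal.toReal_nonneg hr.le

lemma WW_nonneg {S T : Set E} {r : ℝ} (hr : 0 < r) : 0 ≤ WW 0 r S T :=
  le_max_of_le_left (relEx_nonneg hr)

lemma relEx_mono_radius {S T : Set E} (h0 : (0 : E) ∈ T) {ρ ρ' : ℝ} (hρ : 0 < ρ)
    (h : ρ ≤ ρ') : relEx 0 ρ S T ≤ (ρ' / ρ) * relEx 0 ρ' S T := by
  have hρ' : 0 < ρ' := hρ.trans_le h
  have h1 : (ex (S ∩ closedBall 0 ρ) T).toReal ≤ (ex (S ∩ closedBall 0 ρ') T).toReal :=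
    ENNReal.toReal_mono (ex_ne_top h0)
      (ex_mono_left (inter_subset_inter_right _ (closedBall_subset_closedBall h)))
  have h2 : (ρ' / ρ) * relEx 0 ρ' S T = (ex (S ∩ closedBall 0 ρ') T).toReal / ρ := by
    unfold relEx; field_simp
  rw [relEx, h2]
  exact div_le_div_of_nonneg_right h1 hρ.le

lemma WW_mono_radius {S T : Set E} (h0S : (0 : E) ∈ S) (h0T : (0 : E) ∈ T) {ρ ρ' : ℝ}
    (hρ : 0 < ρ) (h : ρ ≤ ρ') : WW 0 ρ S T ≤ (ρ' / ρ) * WW 0 ρ' S T := by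
  have hc : 0 ≤ ρ' / ρ := div_nonneg (hρ.trans_le h).le hρ.le
  refine max_le ?_ ?_
  · exact (relEx_mono_radius h0T hρ h).trans
      (mul_le_mul_of_nonneg_left (le_max_left _ _) hc)
  · exact (relEx_mono_radius h0S hρ h).trans
      (mul_le_mul_of_nonneg_left (le_max_right _ _) hc)

lemma infEdist_smul {c : ℝ} (hc : c ≠ 0) (x : E) (S : Set E) :
    EMetric.infEdist (c • x) (c • S) = (‖c‖₊ : ENNReal) * EMetric.infEdist x S := by
  show (⨅ y ∈ c • S, edist (c • x) y) = (‖c‖₊ : ENNReal) * ⨅ y ∈ S, edist x y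
  rw [← Set.image_smul, iInf_image]
  rw [ENNReal.mul_iInf_of_ne (by simpa using hc) ENNReal.coe_ne_top]
  refine iInf_congr fun b => ?_
  rw [ENNReal.mul_iInf_of_ne (by simpa using hc) ENNReal.coe_ne_top]
  exact iInf_congr fun hb => by rw [edist_smul₀]; rfl

lemma ex_smul {c : ℝ} (hc : c ≠ 0) (X Y : Set E) :
    ex (c • X) (c • Y) = (‖c‖₊ : ENNReal) * ex X Y := by
  rw [ex, ex, ← Set.image_smul, iSup_image, ENNReal.mul_iSup]
  refine iSup_congr fun a => ?_
  rw [ENNReal.mul_iSup]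
  exact iSup_congr fun ha => infEdist_smul hc a Y

lemma smul_inter_ball {t : ℝ} (ht : 0 < t) (S : Set E) (r : ℝ) :
    t⁻¹ • S ∩ closedBall 0 r = t⁻¹ • (S ∩ closedBall 0 (r * t)) := by
  rw [smul_set_inter₀ (inv_ne_zero ht.ne')]
  congr 1
  rw [smul_closedBall' (inv_ne_zero ht.ne'), smul_zero]
  congr 1
  rw [norm_inv, Real.norm_eq_abs, abs_of_pos ht]
  field_simp

lemma relEx_smul {t : ℝ} (ht : 0 < t) (r : ℝ) (S T : Set E) :
    relEx 0 r (t⁻¹ • S) (t⁻¹ • T) = relEx 0 (r * t) S T := by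
  unfold relEx
  rw [smul_inter_ball ht, ex_smul (inv_ne_zero ht.ne'), ENNReal.toReal_mul,
    ENNReal.coe_toReal, coe_nnnorm, norm_inv, Real.norm_eq_abs, abs_of_pos ht]
  rw [inv_mul_eq_div, div_div, mul_comm t r]

lemma WW_smul {t : ℝ} (ht : 0 < t) (r : ℝ) (S T : Set E) :
    WW 0 r (t⁻¹ • S) (t⁻¹ • T) = WW 0 (r * t) S T := by
  unfold WW
  rw [relEx_smul ht, relEx_smul ht]

lemma ex_triangle {A B C : Set E} {r R : ℝ} (hr : 0 ≤ r)
    (h : ex (A ∩ closedBall 0 r) B < ENNReal.ofReal (R - r)) :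
    ex (A ∩ closedBall 0 r) C ≤ ex (A ∩ closedBall 0 r) B + ex (B ∩ closedBall 0 R) C := by
  set ε := ex (A ∩ closedBall 0 r) B with hεdef
  have hRr : 0 < R - r := by
    by_contra hc
    push_neg at hc
    rw [ENNReal.ofReal_eq_zero.2 hc] at h
    exact (not_lt_bot h)
  refine ex_le_iff.2 fun a ha => ?_
  rcases eq_top_or_lt_top (ε + ex (B ∩ closedBall 0 R) C) with htop | hfin
  · exact htop ▸ le_top
  refine ENNReal.le_of_forall_pos_le_add fun η hη _ => ?_
  set δ := min ((η : ENNReal)) (ENNReal.ofReal (R - r) - ε) with hδdef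
  have hδpos : 0 < δ := lt_min (by exact_mod_cast hη) (tsub_pos_of_lt h)
  have hεne : ε ≠ ⊤ := h.ne_top
  have hlt : EMetric.infEdist a B < ε + δ :=
    (le_ex ha).trans_lt (ENNReal.lt_add_right hεne hδpos.ne')
  obtain ⟨b, hbB, hab⟩ := EMetric.infEdist_lt_iff.1 hlt
  have hab2 : edist a b < ENNReal.ofReal (R - r) := by
    refine hab.trans_le ?_
    calc ε + δ ≤ ε + (ENNReal.ofReal (R - r) - ε) := by
          gcongr
          exact min_le_right _ _
      _ = ENNReal.ofReal (R - r) := add_tsub_cancel_of_le h.le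
  have hdab : dist a b ≤ R - r := by
    rw [edist_dist] at hab2
    exact (ENNReal.ofReal_le_ofReal_iff hRr.le).1 hab2.le
  have hbR : b ∈ closedBall (0 : E) R := by
    rw [mem_closedBall]
    calc dist b 0 ≤ dist b a + dist a 0 := dist_triangle _ _ _
      _ ≤ (R - r) + r := add_le_add (by rwa [dist_comm]) (mem_closedBall.mp ha.2)
      _ = R := by ring
  calc EMetric.infEdist a C ≤ EMetric.infEdist b C + edist a b :=
        EMetric.infEdist_le_infEdist_add_edist
    _ ≤ ex (B ∩ closedBall 0 R) C + (ε + δ) :=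
        add_le_add (le_ex ⟨hbB, hbR⟩) hab.le
    _ ≤ ε + ex (B ∩ closedBall 0 R) C + η := by
        have hδη : δ ≤ (η : ENNReal) := min_le_left _ _
        calc ex (B ∩ closedBall 0 R) C + (ε + δ)
            ≤ ex (B ∩ closedBall 0 R) C + (ε + (η : ENNReal)) := by gcongr
          _ = ε + ex (B ∩ closedBall 0 R) C + η := by ring

lemma relEx_lt_ofReal {S T : Set E} {r : ℝ} (hr : 0 < r) (h0 : (0 : E) ∈ T)
    (h : relEx 0 (2 * r) S T < 1 / 2) :
    ex (S ∩ closedBall 0 r) T < ENNReal.ofReal r := by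
  have hlt : (ex (S ∩ closedBall 0 (2 * r)) T).toReal < r := by
    have := (div_lt_iff₀ (by positivity)).1 h
    linarith
  have hle : ex (S ∩ closedBall 0 r) T ≤ ex (S ∩ closedBall 0 (2 * r)) T :=
    ex_mono_left (inter_subset_inter_right _ (closedBall_subset_closedBall (by linarith)))
  refine hle.trans_lt ?_
  rwa [ENNReal.lt_ofReal_iff_toReal_lt (ex_ne_top h0)]

lemma WW_triangle {A B C : Set E} {r : ℝ} (hr : 0 < r)
    (h0A : (0 : E) ∈ A) (h0B : (0 : E) ∈ B) (h0C : (0 : E) ∈ C)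
    (hAB : WW 0 (2 * r) A B < 1 / 2) (hBC : WW 0 (2 * r) B C < 1 / 2) :
    WW 0 r A C ≤ 2 * (WW 0 (2 * r) A B + WW 0 (2 * r) B C) := by
  have h2r : (0:ℝ) < 2 * r := by positivity
  have key : ∀ X Y : Set E, (0 : E) ∈ X → (0 : E) ∈ Y →
      relEx 0 (2 * r) X B < 1 / 2 →
      relEx 0 r X Y ≤ 2 * (relEx 0 (2 * r) X B + relEx 0 (2 * r) B Y) := by
    intro X Y h0X h0Y hXB
    have h1 : ex (X ∩ closedBall 0 r) B < ENNReal.ofReal r := relEx_lt_ofReal hr h0B hXB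
    have h2 : ex (X ∩ closedBall 0 r) Y ≤
        ex (X ∩ closedBall 0 r) B + ex (B ∩ closedBall 0 (2 * r)) Y := by
      refine ex_triangle hr.le ?_
      rwa [show 2 * r - r = r by ring]
    have h3 : (ex (X ∩ closedBall 0 r) Y).toReal ≤
        (ex (X ∩ closedBall 0 (2 * r)) B).toReal + (ex (B ∩ closedBall 0 (2 * r)) Y).toReal := by
      have h4 : ex (X ∩ closedBall 0 r) Y ≤
          ex (X ∩ closedBall 0 (2 * r)) B + ex (B ∩ closedBall 0 (2 * r)) Y :=
        h2.trans (add_le_add_left (ex_mono_left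
          (inter_subset_inter_right _ (closedBall_subset_closedBall (by linarith)))) _)
      calc (ex (X ∩ closedBall 0 r) Y).toReal
          ≤ (ex (X ∩ closedBall 0 (2 * r)) B + ex (B ∩ closedBall 0 (2 * r)) Y).toReal :=
            ENNReal.toReal_mono (ENNReal.add_ne_top.2 ⟨ex_ne_top h0B, ex_ne_top h0Y⟩) h4
        _ = _ := ENNReal.toReal_add (ex_ne_top h0B) (ex_ne_top h0Y)
    have : relEx 0 r X Y ≤
        ((ex (X ∩ closedBall 0 (2*r)) B).toReal + (ex (B ∩ closedBall 0 (2*r)) Y).toReal) / r :=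
      div_le_div_of_nonneg_right h3 hr.le
    refine this.trans (le_of_eq ?_)
    unfold relEx
    field_simp
  refine max_le ?_ ?_
  · have := key A C h0A h0C (lt_of_le_of_lt (le_max_left _ _) hAB)
    refine this.trans ?_
    have e1 : relEx 0 (2*r) A B ≤ WW 0 (2*r) A B := le_max_left _ _
    have e2 : relEx 0 (2*r) B C ≤ WW 0 (2*r) B C := le_max_left _ _
    nlinarith
  · have := key C A h0C h0A (lt_of_le_of_lt (le_max_right _ _) hBC)
    refine this.trans ?_
    have e1 : relEx 0 (2*r) C B ≤ WW 0 (2*r) B C := le_max_right _ _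
    have e2 : relEx 0 (2*r) B A ≤ WW 0 (2*r) A B := le_max_right _ _
    nlinarith


lemma zero_mem_blowup {A : Set E} {x : E} (h : x ∈ A) (t : ℝ) : (0 : E) ∈ blowup A x t :=
  ⟨x, h, by simp⟩

lemma blowup_zero (S : Set E) (t : ℝ) : blowup S 0 t = t⁻¹ • S := by
  ext y
  simp [blowup, Set.mem_smul_set, eq_comm]

lemma blowup_blowup (A : Set E) (x : E) (s t : ℝ) :
    blowup (blowup A x s) 0 t = blowup A x (s * t) := by
  unfold blowup
  rw [← Set.image_comp]
  refine Set.image_congr fun a _ => ?_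
  simp only [Function.comp_apply, sub_zero, smul_smul, mul_inv]
  rw [mul_comm]

end TangentAux

/-- `T` is a pseudotangent set of `A` at `x` directed along `D`. -/
def IsPseudoTangentAlong {n : ℕ} (A : Set (EuclideanSpace ℝ (Fin n)))
    (x : EuclideanSpace ℝ (Fin n)) (D : Set (EuclideanSpace ℝ (Fin n)))
    (T : Set (EuclideanSpace ℝ (Fin n))) : Prop :=
  IsClosed T ∧ (0 : EuclideanSpace ℝ (Fin n)) ∈ T ∧
    ∃ (xs : ℕ → EuclideanSpace ℝ (Fin n)) (rs : ℕ → ℝ),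
      (∀ i, xs i ∈ A) ∧ (∀ i, 0 < rs i) ∧
      Filter.Tendsto xs Filter.atTop (nhds x) ∧
      Filter.Tendsto rs Filter.atTop (nhds 0) ∧
      (∀ i, (rs i)⁻¹ • (xs i - x) ∈ D) ∧
      AWT (fun i => blowup A (xs i) (rs i)) T

/-- `T` is a pseudotangent set of `A` at `x`. -/
def IsPseudoTangent {n : ℕ} (A : Set (EuclideanSpace ℝ (Fin n)))
    (x : EuclideanSpace ℝ (Fin n)) (T : Set (EuclideanSpace ℝ (Fin n))) : Prop :=
  IsPseudoTangentAlong A x Set.univ T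

/-- `T` is a tangent set of `A` at `x`. -/
def IsTangent {n : ℕ} (A : Set (EuclideanSpace ℝ (Fin n)))
    (x : EuclideanSpace ℝ (Fin n)) (T : Set (EuclideanSpace ℝ (Fin n))) : Prop :=
  IsClosed T ∧ (0 : EuclideanSpace ℝ (Fin n)) ∈ T ∧
    ∃ rs : ℕ → ℝ, (∀ i, 0 < rs i) ∧ Filter.Tendsto rs Filter.atTop (nhds 0) ∧
      AWT (fun i => blowup A x (rs i)) T

open TangentAux in
/-- Iteration of tangents: a tangent set of a tangent set is a tangent set. -/
theorem isTangent_trans {n : ℕ} (A : Set (EuclideanSpace ℝ (Fin n)))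
    (hAc : IsClosed A) (x : EuclideanSpace ℝ (Fin n)) (hx : x ∈ A)
    (B C : Set (EuclideanSpace ℝ (Fin n)))
    (hB : IsTangent A x B) (hC : IsTangent B 0 C) :
    IsTangent A x C := by
  obtain ⟨hBc, hB0, rs, hrs_pos, hrs0, hAWB⟩ := hB
  obtain ⟨hCc, hC0, ts, hts_pos, hts0, hBWC⟩ := hC
  have hchoice : ∀ j : ℕ, ∃ i, rs i < 1 ∧
      WW 0 1 (blowup A x (rs i)) B < ts j / ((j : ℝ) + 1) := by
    intro j
    have h1 : ∀ᶠ i in atTop, rs i < 1 := hrs0.eventually_lt_const one_pos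
    have h2 : ∀ᶠ i in atTop, WW 0 1 (blowup A x (rs i)) B < ts j / ((j : ℝ) + 1) :=
      (hAWB 1 one_pos).eventually_lt_const
        (div_pos (hts_pos j) (by positivity))
    exact (h1.and h2).exists
  choose I hI1 hI2 using hchoice
  refine ⟨hCc, hC0, fun j => rs (I j) * ts j,
    fun j => mul_pos (hrs_pos _) (hts_pos _), ?_, ?_⟩
  · refine squeeze_zero (fun j => (mul_pos (hrs_pos _) (hts_pos _)).le) (fun j => ?_) hts0
    calc rs (I j) * ts j ≤ 1 * ts j :=
          mul_le_mul_of_nonneg_right (hI1 j).le (hts_pos j).le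
      _ = ts j := one_mul _
  · intro r hr
    have h2r : (0:ℝ) < 2 * r := by positivity
    have t1 : Tendsto (fun j : ℕ => 1 / (2 * r * ((j : ℝ) + 1))) atTop (𝓝 0) := by
      have h := tendsto_one_div_add_atTop_nhds_zero_nat.const_mul (1 / (2 * r))
      rw [mul_zero] at h
      refine h.congr fun j => ?_
      rw [div_mul_div_comm, one_mul]
    have t2 := hBWC (2 * r) h2r
    have hg : Tendsto
        (fun j : ℕ => 2 * (1 / (2 * r * ((j:ℝ) + 1)) + WW 0 (2*r) (blowup B 0 (ts j)) C))
        atTop (𝓝 0) := by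
      simpa using (t1.add t2).const_mul 2
    refine squeeze_zero' (Eventually.of_forall fun j => WW_nonneg hr) ?_ hg
    have ev1 : ∀ᶠ j in atTop, ts j < 1 / (2 * r) :=
      hts0.eventually_lt_const (by positivity)
    have ev2 : ∀ᶠ j in atTop, WW 0 (2*r) (blowup B 0 (ts j)) C < 1/2 :=
      t2.eventually_lt_const (by norm_num)
    have ev3 : ∀ᶠ j : ℕ in atTop, 1 / (2 * r * ((j:ℝ) + 1)) < 1/2 :=
      t1.eventually_lt_const (by norm_num)
    filter_upwards [ev1, ev2, ev3] with j h1 h2 h3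
    have h0G : (0 : EuclideanSpace ℝ (Fin n)) ∈ blowup A x (rs (I j) * ts j) :=
      zero_mem_blowup hx _
    have h0F : (0 : EuclideanSpace ℝ (Fin n)) ∈ blowup B 0 (ts j) :=
      zero_mem_blowup hB0 _
    have hts1 : 2 * r * ts j ≤ 1 := by
      have := (mul_lt_mul_of_pos_left h1 h2r).le
      calc 2 * r * ts j ≤ 2 * r * (1 / (2 * r)) := this
        _ = 1 := by field_simp
    have hGF : WW 0 (2*r) (blowup A x (rs (I j) * ts j)) (blowup B 0 (ts j))
        ≤ 1 / (2 * r * ((j:ℝ) + 1)) := by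
      rw [← blowup_blowup A x (rs (I j)) (ts j), blowup_zero, blowup_zero,
        WW_smul (hts_pos j)]
      have hm := WW_mono_radius (S := blowup A x (rs (I j))) (T := B)
        (zero_mem_blowup hx _) hB0 (mul_pos h2r (hts_pos j)) hts1
      refine hm.trans ?_
      calc (1 / (2 * r * ts j)) * WW 0 1 (blowup A x (rs (I j))) B
          ≤ (1 / (2 * r * ts j)) * (ts j / ((j:ℝ) + 1)) :=
            mul_le_mul_of_nonneg_left (hI2 j).le
              (one_div_nonneg.2 (mul_pos h2r (hts_pos j)).le)
        _ = 1 / (2 * r * ((j:ℝ) + 1)) := by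
            have hne : (ts j) ≠ 0 := (hts_pos j).ne'
            have hne2 : r ≠ 0 := hr.ne'
            have hj : ((j:ℝ) + 1) ≠ 0 := by positivity
            field_simp
    have hGF2 : WW 0 (2*r) (blowup A x (rs (I j) * ts j)) (blowup B 0 (ts j)) < 1/2 :=
      lt_of_le_of_lt hGF h3
    have htri := WW_triangle hr h0G h0F hC0 hGF2 h2
    refine htri.trans ?_
    have hFC : 0 ≤ WW 0 (2*r) (blowup B 0 (ts j)) C := WW_nonneg h2r
    nlinarith [hGF]
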